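/- Let β : ℝ → Set ℝ be a maximal monotone graph with 0 ∈ β(0), and let m₀ be an interior point of the effective domain D(β). Then there exist constants δ₀ > 0 and c₁ > 0 such that for all ε ∈ (0,1] and all r ∈ ℝ, β_ε(r)(r − m₀) ≥ δ₀ |β_ε(r)| − c₁. -/

import Mathlib

def IsMonotoneGraph (β : ℝ → Set ℝ) : Prop :=
  ∀ ⦃x y u v : ℝ⦄, u ∈ β x → v ∈ β y → 0 ≤ (u - v) * (x - y)

def IsMaximalMonotone (β : ℝ → Set ℝ) : Prop :=
  IsMonotoneGraph β ∧
    ∀ ⦃x u : ℝ⦄, (∀ ⦃y v : ℝ⦄, v ∈ β y → 0 ≤ (u - v) * (x - y)) → u ∈ β x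

def IsResolvent (β : ℝ → Set ℝ) (ε : ℝ) (J : ℝ → ℝ) : Prop :=
  ∀ r : ℝ, (r - J r) / ε ∈ β (J r)

/-- Key pointwise estimate: for any v ∈ β(s), we have δ₀|v| − c₁ ≤ v(s − m₀). -/
lemma gms_key (β : ℝ → Set ℝ) (hmono : IsMonotoneGraph β) (h0 : (0:ℝ) ∈ β 0)
    (m₀ δ₀ up um : ℝ) (hδ : 0 < δ₀)
    (hup : up ∈ β (m₀ + δ₀)) (hum : um ∈ β (m₀ - δ₀)) :
    ∀ s v : ℝ, v ∈ β s →
      δ₀ * |v| - ((|up| + |um|) * (|m₀| + δ₀) + 1) ≤ v * (s - m₀) := by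
  intro s v hv
  set c₁ : ℝ := (|up| + |um|) * (|m₀| + δ₀) + 1 with hc₁
  have hvs : 0 ≤ v * s := by have := hmono hv h0; linarith [this]
  have hm0 : m₀ ≤ |m₀| := le_abs_self m₀
  have hm0' : -|m₀| ≤ m₀ := neg_abs_le m₀
  have hupa : up ≤ |up| := le_abs_self up
  have hupa' : -|up| ≤ up := neg_abs_le up
  have huma : um ≤ |um| := le_abs_self um
  have huma' : -|um| ≤ um := neg_abs_le um
  have habs : (0:ℝ) ≤ |up| + |um| := by positivity
  rcases le_or_gt 0 v with hv0 | hv0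
  · -- v ≥ 0
    rw [abs_of_nonneg hv0]
    have hp := hmono hv hup  -- (v - up)(s - (m₀+δ₀)) ≥ 0
    rcases le_or_gt 0 (s - m₀ - δ₀) with ht | ht
    · nlinarith [mul_nonneg hv0 ht, mul_nonneg habs (abs_nonneg m₀)]
    · -- t < 0 ⇒ v ≤ up
      have hvu : v ≤ up := by nlinarith
      rcases eq_or_lt_of_le hv0 with h | h
      · nlinarith [mul_nonneg habs (by positivity : (0:ℝ) ≤ |m₀| + δ₀)]
      · have hs0 : 0 ≤ s := by nlinarith
        -- s - m₀ - δ₀ ≥ -(|m₀| + δ₀)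
        have htb : -(|m₀| + δ₀) ≤ s - m₀ - δ₀ := by linarith
        have : v * (s - m₀ - δ₀) ≥ -(v * (|m₀| + δ₀)) := by nlinarith
        have hvup : v * (|m₀| + δ₀) ≤ |up| * (|m₀| + δ₀) := by nlinarith
        nlinarith [mul_nonneg (abs_nonneg um) (by positivity : (0:ℝ) ≤ |m₀| + δ₀)]
  · -- v < 0
    rw [abs_of_neg hv0]
    have hp := hmono hv hum  -- (v - um)(s - (m₀-δ₀)) ≥ 0
    rcases le_or_gt (s - m₀ + δ₀) 0 with ht | ht
    · nlinarith [mul_nonneg habs (abs_nonneg m₀)]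
    · have hvu : um ≤ v := by nlinarith
      have hs0 : s ≤ 0 := by nlinarith
      have htb : s - m₀ + δ₀ ≤ |m₀| + δ₀ := by linarith
      have h1 : v * (s - m₀ + δ₀) ≥ v * (|m₀| + δ₀) := by nlinarith
      have h2 : v * (|m₀| + δ₀) ≥ -(|um| * (|m₀| + δ₀)) := by nlinarith
      nlinarith [mul_nonneg (abs_nonneg up) (by positivity : (0:ℝ) ≤ |m₀| + δ₀)]

/-- Gilardi-Miranville-Schimperna inequality: if m₀ is interior to the domain of β,
then the Yosida approximations satisfy β_ε(r)(r − m₀) ≥ δ₀|β_ε(r)| − c₁ uniformly in ε ∈ (0,1]. -/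
theorem gms_inequality (β : ℝ → Set ℝ) (hβ : IsMaximalMonotone β)
    (h0 : (0:ℝ) ∈ β 0) (m₀ : ℝ)
    (hm₀ : m₀ ∈ interior {r : ℝ | (β r).Nonempty}) :
    ∃ δ₀ > (0:ℝ), ∃ c₁ > (0:ℝ), ∀ ε : ℝ, 0 < ε → ε ≤ 1 →
      ∀ J : ℝ → ℝ, IsResolvent β ε J →
        ∀ r : ℝ, δ₀ * |(r - J r) / ε| - c₁ ≤ ((r - J r) / ε) * (r - m₀) := by
  obtain ⟨hmono, -⟩ := hβ
  rcases Metric.mem_nhds_iff.mp (mem_interior_iff_mem_nhds.mp hm₀) with ⟨ρ, hρ, hball⟩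
  set δ₀ : ℝ := ρ / 2 with hδ₀def
  have hδ : 0 < δ₀ := by positivity
  have hp : ((m₀ + δ₀) ∈ {r : ℝ | (β r).Nonempty}) := by
    apply hball
    simp only [Metric.mem_ball, Real.dist_eq]
    rw [show m₀ + δ₀ - m₀ = δ₀ by ring, abs_of_pos hδ]
    linarith
  have hm : ((m₀ - δ₀) ∈ {r : ℝ | (β r).Nonempty}) := by
    apply hball
    simp only [Metric.mem_ball, Real.dist_eq]
    rw [show m₀ - δ₀ - m₀ = -δ₀ by ring, abs_neg, abs_of_pos hδ]
    linarith
  obtain ⟨up, hup⟩ := hp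
  obtain ⟨um, hum⟩ := hm
  refine ⟨δ₀, hδ, (|up| + |um|) * (|m₀| + δ₀) + 1, by positivity, ?_⟩
  intro ε hε hε1 J hJ r
  have hv := hJ r
  set v : ℝ := (r - J r) / ε with hvdef
  have key := gms_key β hmono h0 m₀ δ₀ up um hδ hup hum (J r) v hv
  have hεv : ε * v = r - J r := by rw [hvdef]; field_simp [hε.ne']
  have : v * (r - m₀) = v * (J r - m₀) + v * (ε * v) := by rw [hεv]; ring
  nlinarith [sq_nonneg v, mul_nonneg hε.le (sq_nonneg v)]
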